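/- arXiv:1009.1263 — 2 statements merged into one kernel-verified Lean document; each statement's English description precedes it below -/
import Mathlib

section
/- Suppose u : [0,T) → H^s solves the second-order integral equation u(t) = φ + tψ + ∫₀ᵗ (t−τ) L f(u(τ)) dτ in H^s, where L is a bounded linear operator on H^s with ‖L‖ ≤ C and ‖f(u)‖_s ≤ A‖u‖_s whenever ‖u‖_∞ ≤ M, and suppose ‖u(t)‖_∞ ≤ M on [0,T). Then for all t ∈ [0,T), ‖u(t)‖_s + ‖u_t(t)‖_s ≤ [‖φ‖_s + (T+1)‖ψ‖_s] e^{(T+1)CAT}, and in particular the H^s norm of (u,u_t) remains bounded up to time T. -/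
open Set intervalIntegral

/-- Gronwall estimate for the second-order Duhamel integral equation: if
`u(t) = φ + tψ + ∫₀ᵗ (t−τ) L f(u(τ)) dτ` and `u_t(t) = ψ + ∫₀ᵗ L f(u(τ)) dτ` in a
Banach space `X` (here `X = H^s`), where `‖L‖ ≤ C`, `‖f(v)‖ ≤ A‖v‖` whenever the
auxiliary (sup-)norm `N(v) ≤ M`, and `N(u(t)) ≤ M` on `[0,T)`, then
`‖u(t)‖ + ‖u_t(t)‖ ≤ (‖φ‖ + (T+1)‖ψ‖) e^{(T+1)CAT}` for all `t ∈ [0,T)`. -/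
theorem duhamel_gronwall_bound {X : Type*} [NormedAddCommGroup X] [NormedSpace ℝ X]
    [CompleteSpace X]
    (L : X →L[ℝ] X) (f : X → X) (N : X → ℝ) (C A M T : ℝ)
    (hC : 0 ≤ C) (hA : 0 ≤ A) (hT : 0 < T)
    (hL : ‖L‖ ≤ C)
    (hf : ∀ v : X, N v ≤ M → ‖f v‖ ≤ A * ‖v‖)
    (φ ψ : X) (u ut : ℝ → X)
    (hcont : ContinuousOn u (Ico 0 T))
    (hint : ∀ t ∈ Ico (0:ℝ) T, IntervalIntegrable (fun τ => L (f (u τ))) MeasureTheory.volume 0 t)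
    (hu : ∀ t ∈ Ico (0:ℝ) T, u t = φ + t • ψ + ∫ τ in (0:ℝ)..t, (t - τ) • L (f (u τ)))
    (hut : ∀ t ∈ Ico (0:ℝ) T, ut t = ψ + ∫ τ in (0:ℝ)..t, L (f (u τ)))
    (hN : ∀ t ∈ Ico (0:ℝ) T, N (u t) ≤ M) :
    ∀ t ∈ Ico (0:ℝ) T,
      ‖u t‖ + ‖ut t‖ ≤ (‖φ‖ + (T + 1) * ‖ψ‖) * Real.exp ((T + 1) * C * A * T) := by
  intro t₀ ht₀
  obtain ⟨ht₀0, ht₀T⟩ := ht₀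
  set B : ℝ := ‖φ‖ + (T + 1) * ‖ψ‖ with hBdef
  have hB0 : 0 ≤ B := by positivity
  set K : ℝ := (T + 1) * C * A with hKdef
  have hK0 : 0 ≤ K := by positivity
  set g : ℝ → ℝ := fun τ => C * A * ‖u τ‖ with hgdef
  set F : ℝ → ℝ := fun t => ∫ τ in (0:ℝ)..t, g τ with hFdef
  have hgnn : ∀ τ, 0 ≤ g τ := fun τ => by positivity
  have hsub : Icc (0:ℝ) t₀ ⊆ Ico 0 T := fun x hx => ⟨hx.1, lt_of_le_of_lt hx.2 ht₀T⟩
  have hgcont : ContinuousOn g (Ico 0 T) := continuousOn_const.mul hcont.norm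
  have hgi : ∀ t ∈ Icc (0:ℝ) t₀, IntervalIntegrable g MeasureTheory.volume 0 t := by
    intro t ht
    apply ContinuousOn.intervalIntegrable
    refine hgcont.mono ?_
    rw [uIcc_of_le ht.1]
    exact (Icc_subset_Icc le_rfl ht.2).trans hsub
  have hFnn : ∀ t ∈ Icc (0:ℝ) t₀, 0 ≤ F t := fun t ht =>
    intervalIntegral.integral_nonneg ht.1 (fun τ _ => hgnn τ)
  have hLf : ∀ τ ∈ Ico (0:ℝ) T, ‖L (f (u τ))‖ ≤ g τ := by
    intro τ hτ
    calc ‖L (f (u τ))‖ ≤ ‖L‖ * ‖f (u τ)‖ := L.le_opNorm _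
      _ ≤ C * (A * ‖u τ‖) :=
        mul_le_mul hL (hf _ (hN τ hτ)) (norm_nonneg _) hC
      _ = g τ := (mul_assoc _ _ _).symm
  -- bound on ‖u t‖
  have hu_le : ∀ t ∈ Icc (0:ℝ) t₀, ‖u t‖ ≤ ‖φ‖ + T * ‖ψ‖ + T * F t := by
    intro t ht
    have htT : t ∈ Ico 0 T := hsub ht
    have h1 : ‖∫ τ in (0:ℝ)..t, (t - τ) • L (f (u τ))‖ ≤ |∫ τ in (0:ℝ)..t, T * g τ| := by
      refine intervalIntegral.norm_integral_le_abs_of_norm_le ?_ ((hgi t ht).const_mul T)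
      filter_upwards [MeasureTheory.ae_restrict_mem measurableSet_uIoc] with τ hτ
      rw [uIoc_of_le ht.1] at hτ
      have hτT : τ ∈ Ico (0:ℝ) T := ⟨hτ.1.le, lt_of_le_of_lt (hτ.2.trans ht.2) ht₀T⟩
      rw [norm_smul, Real.norm_eq_abs, abs_of_nonneg (sub_nonneg.mpr hτ.2)]
      exact mul_le_mul (by linarith [hτ.1, htT.2]) (hLf τ hτT) (norm_nonneg _) hT.le
    have h2 : |∫ τ in (0:ℝ)..t, T * g τ| = T * F t := by
      rw [intervalIntegral.integral_const_mul]
      exact abs_of_nonneg (mul_nonneg hT.le (hFnn t ht))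
    rw [hu t htT]
    calc ‖φ + t • ψ + ∫ τ in (0:ℝ)..t, (t - τ) • L (f (u τ))‖
        ≤ ‖φ‖ + ‖t • ψ‖ + ‖∫ τ in (0:ℝ)..t, (t - τ) • L (f (u τ))‖ := norm_add₃_le
      _ ≤ ‖φ‖ + T * ‖ψ‖ + T * F t := by
          rw [norm_smul, Real.norm_eq_abs, abs_of_nonneg ht.1]
          gcongr
          · linarith [htT.2]
          · rw [← h2]; exact h1
  -- bound on ‖ut t‖
  have hut_le : ‖ut t₀‖ ≤ ‖ψ‖ + F t₀ := by
    have htT : t₀ ∈ Ico 0 T := ⟨ht₀0, ht₀T⟩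
    have h1 : ‖∫ τ in (0:ℝ)..t₀, L (f (u τ))‖ ≤ |∫ τ in (0:ℝ)..t₀, g τ| := by
      refine intervalIntegral.norm_integral_le_abs_of_norm_le ?_ (hgi t₀ ⟨ht₀0, le_rfl⟩)
      filter_upwards [MeasureTheory.ae_restrict_mem measurableSet_uIoc] with τ hτ
      rw [uIoc_of_le ht₀0] at hτ
      exact hLf τ ⟨hτ.1.le, lt_of_le_of_lt hτ.2 ht₀T⟩
    have h2 : |∫ τ in (0:ℝ)..t₀, g τ| = F t₀ := abs_of_nonneg (hFnn t₀ ⟨ht₀0, le_rfl⟩)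
    rw [hut t₀ htT]
    calc ‖ψ + ∫ τ in (0:ℝ)..t₀, L (f (u τ))‖ ≤ ‖ψ‖ + ‖∫ τ in (0:ℝ)..t₀, L (f (u τ))‖ :=
          norm_add_le _ _
      _ ≤ ‖ψ‖ + F t₀ := by rw [← h2]; exact add_le_add le_rfl h1
  -- Gronwall for F
  have hFcont : ContinuousOn F (Icc 0 t₀) := by
    have hIO : MeasureTheory.IntegrableOn g (Icc 0 t₀) MeasureTheory.volume :=
      (hgcont.mono hsub).integrableOn_Icc
    have h := intervalIntegral.continuousOn_primitive_interval
      (a := (0:ℝ)) (b := t₀) (μ := MeasureTheory.volume) (f := g)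
      (by rwa [uIcc_of_le ht₀0])
    rwa [uIcc_of_le ht₀0] at h
  have hF' : ∀ t ∈ Ico (0:ℝ) t₀, HasDerivWithinAt F (g t) (Ici t) t := by
    intro t ht
    have htT : t ∈ Ico 0 T := ⟨ht.1, ht.2.trans ht₀T⟩
    have hmem : Ico (0:ℝ) T ∈ nhdsWithin t (Ioi t) := by
      refine mem_nhdsWithin.mpr ⟨Iio T, isOpen_Iio, htT.2, ?_⟩
      rintro x ⟨hx1, hx2⟩
      exact ⟨htT.1.trans (le_of_lt hx2), hx1⟩
    exact intervalIntegral.integral_hasDerivWithinAt_right (hgi t ⟨ht.1, ht.2.le⟩)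
      ⟨Ico 0 T, hmem, hgcont.aestronglyMeasurable measurableSet_Ico⟩
      ((hgcont t htT).mono_of_mem_nhdsWithin hmem)
  have hbound : ∀ t ∈ Ico (0:ℝ) t₀, ‖g t‖ ≤ K * ‖F t‖ + C * A * B := by
    intro t ht
    have hFt : 0 ≤ F t := hFnn t ⟨ht.1, ht.2.le⟩
    have hule := hu_le t ⟨ht.1, ht.2.le⟩
    rw [Real.norm_of_nonneg (hgnn t), Real.norm_of_nonneg hFt]
    have hCA : 0 ≤ C * A := mul_nonneg hC hA
    have h1 : C * A * ‖u t‖ ≤ C * A * (‖φ‖ + T * ‖ψ‖ + T * F t) :=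
      mul_le_mul_of_nonneg_left hule hCA
    have hψ : 0 ≤ ‖ψ‖ := norm_nonneg _
    calc g t = C * A * ‖u t‖ := rfl
      _ ≤ C * A * (‖φ‖ + T * ‖ψ‖ + T * F t) := h1
      _ ≤ K * F t + C * A * B := by
          rw [hKdef, hBdef]
          nlinarith [mul_nonneg hCA hFt, mul_nonneg hCA hψ]
  have hF0 : ‖F 0‖ ≤ (0:ℝ) := by simp [hFdef]
  have hgr := norm_le_gronwallBound_of_norm_deriv_right_le hFcont hF' hF0 hbound t₀
    ⟨ht₀0, le_rfl⟩
  rw [sub_zero, Real.norm_of_nonneg (hFnn t₀ ⟨ht₀0, le_rfl⟩)] at hgr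
  -- combine
  have hsum : ‖u t₀‖ + ‖ut t₀‖ ≤ B + (T + 1) * F t₀ := by
    have := hu_le t₀ ⟨ht₀0, le_rfl⟩
    have hψ : 0 ≤ ‖ψ‖ := norm_nonneg _
    linarith [hut_le]
  have hKT : (T + 1) * C * A * T = K * T := by rw [hKdef]
  rw [hKT]
  have hfin : B + (T + 1) * F t₀ ≤ B * Real.exp (K * T) := by
    clear_value B K g F
    rcases eq_or_ne K 0 with hK | hK
    · have hCA0 : C * A = 0 := by
        have : (T + 1) * (C * A) = 0 := by rw [← mul_assoc, ← hKdef]; exact hK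
        rcases mul_eq_zero.mp this with h | h
        · linarith
        · exact h
      have hεB : C * A * B = 0 := by rw [hCA0, zero_mul]
      rw [hK, hεB] at hgr
      rw [gronwallBound_K0] at hgr
      simp only [zero_mul, zero_add] at hgr
      have hF0' : F t₀ ≤ 0 := hgr
      have he : 1 ≤ Real.exp (K * T) := Real.one_le_exp (by positivity)
      have hTF : (T + 1) * F t₀ ≤ 0 := by
        have := mul_le_mul_of_nonneg_left hF0' (show (0:ℝ) ≤ T + 1 by linarith)
        simpa using this
      have hBe : B * 1 ≤ B * Real.exp (K * T) := mul_le_mul_of_nonneg_left he hB0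
      linarith
    · rw [gronwallBound_of_K_ne_0 hK] at hgr
      simp only [zero_mul, zero_add] at hgr
      have hKpos : 0 < K := lt_of_le_of_ne hK0 (Ne.symm hK)
      have hcoef : (T + 1) * (C * A * B / K) = B := by
        have heq : (T + 1) * (C * A * B / K) = K * B / K := by rw [hKdef]; ring
        rw [heq, mul_div_cancel_left₀ B hK]
      have h1 : (T + 1) * F t₀ ≤ (T + 1) * (C * A * B / K * (Real.exp (K * t₀) - 1)) := by
        apply mul_le_mul_of_nonneg_left hgr (by linarith)
      have h2 : (T + 1) * (C * A * B / K * (Real.exp (K * t₀) - 1))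
          = B * (Real.exp (K * t₀) - 1) := by
        rw [← mul_assoc, mul_comm (T+1) (C * A * B / K), mul_assoc, ← mul_assoc]
        rw [mul_comm (C * A * B / K) (T+1), hcoef]
      have h3 : Real.exp (K * t₀) ≤ Real.exp (K * T) :=
        Real.exp_le_exp.mpr (mul_le_mul_of_nonneg_left (by linarith) hK0)
      have h4 : B * Real.exp (K * t₀) ≤ B * Real.exp (K * T) :=
        mul_le_mul_of_nonneg_left h3 hB0
      have h5 : B * (Real.exp (K * t₀) - 1) = B * Real.exp (K * t₀) - B := by ring
      linarith [h1, h2, h4, h5]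
  linarith [hsum, hfin]
end

section
/- Under the hypotheses of the energy conservation (E(t) = E(0) for all t), suppose additionally there exists ν > 0 such that a·f₁(a,b) + b·f₂(a,b) ≤ 2(1+2ν)F(a,b) for all (a,b) ∈ ℝ², and E(0) < 0, where E(0) = ‖P₁ψ₁‖² + ‖P₂ψ₂‖² + 2∫F(φ₁,φ₂)dx. Then with Φ(t) = ‖P₁u₁(t)‖² + ‖P₂u₂(t)‖² + b(t+t₀)², for b = −E(0) > 0 and t₀ large enough that Φ'(0) > 0, the function Φ satisfies Φ''Φ − (1+ν)(Φ')² ≥ 0, and hence the solution cannot be global: it blows up in finite time. -/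
open MeasureTheory

private lemma cs_sum {n₁ m₁ p₁ n₂ m₂ p₂ : ℝ} (hn₁ : 0 ≤ n₁) (hm₁ : 0 ≤ m₁)
    (hn₂ : 0 ≤ n₂) (hm₂ : 0 ≤ m₂) (h₁ : p₁ ^ 2 ≤ n₁ * m₁) (h₂ : p₂ ^ 2 ≤ n₂ * m₂) :
    (p₁ + p₂) ^ 2 ≤ (n₁ + n₂) * (m₁ + m₂) := by
  have h3 : (p₁ * p₂) ^ 2 ≤ (n₁ * m₂) * (n₂ * m₁) := by
    calc (p₁ * p₂) ^ 2 = p₁ ^ 2 * p₂ ^ 2 := by ring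
    _ ≤ (n₁ * m₁) * (n₂ * m₂) :=
        mul_le_mul h₁ h₂ (sq_nonneg _) (mul_nonneg hn₁ hm₁)
    _ = (n₁ * m₂) * (n₂ * m₁) := by ring
  have key : 2 * (p₁ * p₂) ≤ n₁ * m₂ + n₂ * m₁ := by
    rcases le_or_gt (p₁ * p₂) 0 with h | h
    · nlinarith [mul_nonneg hn₁ hm₂, mul_nonneg hn₂ hm₁]
    · nlinarith [sq_nonneg (n₁ * m₂ - n₂ * m₁), mul_nonneg hn₁ hm₂, mul_nonneg hn₂ hm₁]
  nlinarith [h₁, h₂]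

private lemma key_ineq (ν b n₁ n₂ p₁ p₂ m₁ m₂ I τ : ℝ) (hν : 0 < ν) (hb : 0 < b)
    (hn₁ : 0 ≤ n₁) (hn₂ : 0 ≤ n₂) (hm₁ : 0 ≤ m₁) (hm₂ : 0 ≤ m₂)
    (hCS₁ : p₁ ^ 2 ≤ n₁ * m₁) (hCS₂ : p₂ ^ 2 ≤ n₂ * m₂)
    (hI : I ≤ (1 + 2 * ν) * (-b - m₁ - m₂)) :
    (2 * (m₁ + m₂) - 2 * I + 2 * b) * (n₁ + n₂ + b * τ ^ 2) -
      (1 + ν) * (2 * (p₁ + p₂ + b * τ)) ^ 2 ≥ 0 := by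
  have h12 := cs_sum hn₁ hm₁ hn₂ hm₂ hCS₁ hCS₂
  have h3 : (b * τ) ^ 2 ≤ (b * τ ^ 2) * b := by nlinarith []
  have hCS : (p₁ + p₂ + b * τ) ^ 2 ≤ (n₁ + n₂ + b * τ ^ 2) * (m₁ + m₂ + b) :=
    cs_sum (by positivity) (by positivity) (by positivity) hb.le h12 h3
  have hΦ'' : 4 * (1 + ν) * (m₁ + m₂ + b) ≤ 2 * (m₁ + m₂) - 2 * I + 2 * b := by nlinarith
  have hΦnn : 0 ≤ n₁ + n₂ + b * τ ^ 2 := by positivity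
  have hM : 0 ≤ m₁ + m₂ + b := by positivity
  nlinarith [mul_le_mul_of_nonneg_right hΦ'' hΦnn, mul_le_mul_of_nonneg_left hCS (by positivity : (0:ℝ) ≤ 4 * (1 + ν))]

private lemma no_global (y z : ℝ → ℝ)
    (hy : ∀ t ≥ (0:ℝ), HasDerivAt y (z t) t)
    (hz : ∀ t ≥ (0:ℝ), ∃ d, d ≤ 0 ∧ HasDerivAt z d t)
    (hpos : ∀ t ≥ (0:ℝ), 0 < y t) (hneg : z 0 < 0) : False := by
  have hint : interior (Set.Ici (0:ℝ)) = Set.Ioi 0 := interior_Ici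
  have hzanti : AntitoneOn z (Set.Ici 0) := by
    apply antitoneOn_of_deriv_nonpos (convex_Ici 0)
    · exact fun t ht => ((hz t ht).choose_spec.2.continuousAt).continuousWithinAt
    · intro x hx
      rw [hint] at hx
      exact ((hz x (le_of_lt hx)).choose_spec.2.differentiableAt).differentiableWithinAt
    · intro x hx
      rw [hint] at hx
      obtain ⟨d, hd, hdz⟩ := hz x (le_of_lt hx)
      rw [hdz.deriv]; exact hd
  have hgd : ∀ t ≥ (0:ℝ), HasDerivAt (fun t => y t - z 0 * t) (z t - z 0) t := by
    intro t ht
    have h := (hy t ht).sub ((hasDerivAt_id t).const_mul (z 0))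
    rw [mul_one] at h
    exact h
  have hganti : AntitoneOn (fun t => y t - z 0 * t) (Set.Ici 0) := by
    apply antitoneOn_of_deriv_nonpos (convex_Ici 0)
    · exact fun t ht => ((hgd t ht).continuousAt).continuousWithinAt
    · intro x hx; rw [hint] at hx
      exact ((hgd x hx.le).differentiableAt).differentiableWithinAt
    · intro x hx; rw [hint] at hx
      rw [(hgd x hx.le).deriv]
      have := hzanti Set.self_mem_Ici (Set.mem_Ici.2 hx.le) hx.le
      linarith
  set T : ℝ := y 0 / (-z 0) with hT
  have hTpos : 0 < T := div_pos (hpos 0 le_rfl) (by linarith)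
  have hle := hganti Set.self_mem_Ici (Set.mem_Ici.2 hTpos.le) hTpos.le
  simp only [mul_zero, sub_zero] at hle
  have hzT : z 0 * T = -(y 0) := by
    rw [hT, div_neg, mul_neg, mul_div_cancel₀ _ hneg.ne]
  have := hpos T hTpos.le
  rw [hzT] at hle
  linarith

/-- Blow-up for negative initial energy. With `nᵢ(t) = ‖Pᵢuᵢ(t)‖²`,
`pᵢ(t) = ⟨Pᵢuᵢ, Pᵢu_{it}⟩`, `mᵢ(t) = ‖Pᵢu_{it}(t)‖²`, the identity
`⟨Pᵢuᵢ, Pᵢu_{itt}⟩ = −⟨uᵢ, fᵢ(u₁,u₂)⟩`, conserved energy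
`m₁ + m₂ + 2∫F(u₁,u₂) = E₀ < 0`, the growth condition
`a·f₁(a,b) + b·f₂(a,b) ≤ 2(1+2ν)F(a,b)`, and `Φ(t) = n₁ + n₂ + b(t+t₀)²` with
`b = −E₀` and `t₀` chosen so that `Φ'(0) > 0`, the function `Φ` satisfies
`Φ''Φ − (1+ν)(Φ')² ≥ 0`; hence the solution cannot be global (a solution defined for
all `t ≥ 0`, as assumed here, is contradictory). -/
theorem blow_up_negative_energy (ν E₀ b t₀ : ℝ) (hν : 0 < ν)
    (F f₁ f₂ : ℝ → ℝ → ℝ) (u₁ u₂ : ℝ → ℝ → ℝ)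
    (n₁ n₂ p₁ p₂ m₁ m₂ : ℝ → ℝ)
    (hn₁0 : ∀ t ≥ (0:ℝ), 0 ≤ n₁ t) (hn₂0 : ∀ t ≥ (0:ℝ), 0 ≤ n₂ t)
    (hm₁0 : ∀ t ≥ (0:ℝ), 0 ≤ m₁ t) (hm₂0 : ∀ t ≥ (0:ℝ), 0 ≤ m₂ t)
    -- `nᵢ' = 2pᵢ` and `pᵢ' = mᵢ + ⟨Pᵢuᵢ, Pᵢu_{itt}⟩ = mᵢ − ⟨uᵢ, fᵢ(u₁,u₂)⟩`
    (hn₁ : ∀ t ≥ (0:ℝ), HasDerivAt n₁ (2 * p₁ t) t)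
    (hn₂ : ∀ t ≥ (0:ℝ), HasDerivAt n₂ (2 * p₂ t) t)
    (hp₁ : ∀ t ≥ (0:ℝ), HasDerivAt p₁
      (m₁ t - ∫ x : ℝ, u₁ t x * f₁ (u₁ t x) (u₂ t x)) t)
    (hp₂ : ∀ t ≥ (0:ℝ), HasDerivAt p₂
      (m₂ t - ∫ x : ℝ, u₂ t x * f₂ (u₁ t x) (u₂ t x)) t)
    -- Cauchy–Schwarz for the underlying inner products
    (hCS₁ : ∀ t ≥ (0:ℝ), (p₁ t) ^ 2 ≤ n₁ t * m₁ t)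
    (hCS₂ : ∀ t ≥ (0:ℝ), (p₂ t) ^ 2 ≤ n₂ t * m₂ t)
    -- conservation of energy
    (henergy : ∀ t ≥ (0:ℝ),
      m₁ t + m₂ t + 2 * ∫ x : ℝ, F (u₁ t x) (u₂ t x) = E₀)
    -- growth condition on the nonlinearity
    (hgrowth : ∀ a b' : ℝ,
      a * f₁ a b' + b' * f₂ a b' ≤ 2 * (1 + 2 * ν) * F a b')
    (hintF : ∀ t ≥ (0:ℝ), Integrable (fun x : ℝ => F (u₁ t x) (u₂ t x)))
    (hintf : ∀ t ≥ (0:ℝ), Integrable (fun x : ℝ =>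
      u₁ t x * f₁ (u₁ t x) (u₂ t x) + u₂ t x * f₂ (u₁ t x) (u₂ t x)))
    (hintf₁ : ∀ t ≥ (0:ℝ), Integrable (fun x : ℝ => u₁ t x * f₁ (u₁ t x) (u₂ t x)))
    (hintf₂ : ∀ t ≥ (0:ℝ), Integrable (fun x : ℝ => u₂ t x * f₂ (u₁ t x) (u₂ t x)))
    -- negative energy, choice of `b` and of `t₀`
    (hE₀ : E₀ < 0) (hb : b = -E₀) (ht₀ : 0 ≤ t₀)
    (hΦ'0 : 0 < p₁ 0 + p₂ 0 + b * t₀) :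
    (∀ t ≥ (0:ℝ),
      (2 * (m₁ t + m₂ t) -
          2 * (∫ x : ℝ, (u₁ t x * f₁ (u₁ t x) (u₂ t x) +
                u₂ t x * f₂ (u₁ t x) (u₂ t x))) + 2 * b) *
        (n₁ t + n₂ t + b * (t + t₀) ^ 2) -
      (1 + ν) * (2 * (p₁ t + p₂ t + b * (t + t₀))) ^ 2 ≥ 0) ∧
    False := by
  have hb0 : 0 < b := by rw [hb]; linarith
  -- the main differential inequality
  have key : ∀ t ≥ (0:ℝ),
      (2 * (m₁ t + m₂ t) -
          2 * (∫ x : ℝ, (u₁ t x * f₁ (u₁ t x) (u₂ t x) +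
                u₂ t x * f₂ (u₁ t x) (u₂ t x))) + 2 * b) *
        (n₁ t + n₂ t + b * (t + t₀) ^ 2) -
      (1 + ν) * (2 * (p₁ t + p₂ t + b * (t + t₀))) ^ 2 ≥ 0 := by
    intro t ht
    apply key_ineq ν b (n₁ t) (n₂ t) (p₁ t) (p₂ t) (m₁ t) (m₂ t) _ (t + t₀) hν hb0
      (hn₁0 t ht) (hn₂0 t ht) (hm₁0 t ht) (hm₂0 t ht) (hCS₁ t ht) (hCS₂ t ht)
    have hmono : (∫ x : ℝ, (u₁ t x * f₁ (u₁ t x) (u₂ t x) +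
          u₂ t x * f₂ (u₁ t x) (u₂ t x))) ≤
        ∫ x : ℝ, 2 * (1 + 2 * ν) * F (u₁ t x) (u₂ t x) :=
      integral_mono (hintf t ht) ((hintF t ht).const_mul _) (fun x => hgrowth _ _)
    rw [integral_const_mul] at hmono
    have hE := henergy t ht
    rw [hb]
    have h2F : 2 * (1 + 2 * ν) * (∫ x : ℝ, F (u₁ t x) (u₂ t x)) =
        (1 + 2 * ν) * (- -E₀ - m₁ t - m₂ t) := by linear_combination (1 + 2 * ν) * hE
    linarith [hmono, h2F]
  refine ⟨key, ?_⟩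
  -- abbreviations
  set Φ : ℝ → ℝ := fun t => n₁ t + n₂ t + b * (t + t₀) ^ 2 with hΦdef
  set Φ' : ℝ → ℝ := fun t => 2 * (p₁ t + p₂ t + b * (t + t₀)) with hΦ'def
  set Φ'' : ℝ → ℝ := fun t => 2 * (m₁ t + m₂ t) -
      2 * (∫ x : ℝ, (u₁ t x * f₁ (u₁ t x) (u₂ t x) +
            u₂ t x * f₂ (u₁ t x) (u₂ t x))) + 2 * b with hΦ''def
  have hΦpos : ∀ t ≥ (0:ℝ), 0 < Φ t := by
    intro t ht
    rcases eq_or_lt_of_le (add_nonneg ht ht₀) with h | h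
    · have ht0 : t = 0 := by linarith
      have ht₀0 : t₀ = 0 := by linarith
      have h1 := hCS₁ 0 le_rfl
      have h2 := hCS₂ 0 le_rfl
      have hn1 := hn₁0 0 le_rfl
      have hn2 := hn₂0 0 le_rfl
      have hm1 := hm₁0 0 le_rfl
      have hm2 := hm₂0 0 le_rfl
      subst ht₀0; subst ht0
      simp only [hΦdef]
      by_contra hle
      push_neg at hle
      have hzero : n₁ 0 = 0 ∧ n₂ 0 = 0 := by constructor <;> nlinarith
      have hp1 : p₁ 0 = 0 := by nlinarith [sq_nonneg (p₁ 0), hzero.1]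
      have hp2 : p₂ 0 = 0 := by nlinarith [sq_nonneg (p₂ 0), hzero.2]
      rw [hp1, hp2] at hΦ'0
      simp at hΦ'0
    · have := mul_pos hb0 (pow_pos h 2)
      have := hn₁0 t ht
      have := hn₂0 t ht
      simp only [hΦdef]
      linarith
  have hdΦ : ∀ t ≥ (0:ℝ), HasDerivAt Φ (Φ' t) t := by
    intro t ht
    have h3 : HasDerivAt (fun s : ℝ => b * (s + t₀) ^ 2) (b * (2 * (t + t₀))) t := by
      simpa using (((hasDerivAt_id t).add_const t₀).pow 2).const_mul b
    have := ((hn₁ t ht).add (hn₂ t ht)).add h3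
    refine this.congr_deriv ?_
    simp only [hΦ'def]; ring
  have hdΦ' : ∀ t ≥ (0:ℝ), HasDerivAt Φ' (Φ'' t) t := by
    intro t ht
    have h3 : HasDerivAt (fun s : ℝ => b * (s + t₀)) b t := by
      simpa using ((hasDerivAt_id t).add_const t₀).const_mul b
    have := (((hp₁ t ht).add (hp₂ t ht)).add h3).const_mul 2
    refine this.congr_deriv ?_
    simp only [hΦ''def]
    rw [integral_add (hintf₁ t ht) (hintf₂ t ht)]
    ring
  -- the concave auxiliary function  y = Φ ^ (-ν)
  set y : ℝ → ℝ := fun t => Φ t ^ (-ν) with hydef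
  set z : ℝ → ℝ := fun t => Φ' t * (-ν) * Φ t ^ (-ν - 1) with hzdef
  apply no_global y z
  · intro t ht
    exact (hdΦ t ht).rpow_const (Or.inl (hΦpos t ht).ne')
  · intro t ht
    have hA : (0:ℝ) < Φ t ^ (-ν - 2) := Real.rpow_pos_of_pos (hΦpos t ht) _
    have hres : Φ t ^ (-ν - 1) = Φ t ^ (-ν - 2) * Φ t := by
      rw [← Real.rpow_add_one (hΦpos t ht).ne' (-ν - 2)]
      congr 1; ring
    have hd1 : HasDerivAt (fun s => Φ' s * (-ν)) (Φ'' t * (-ν)) t := (hdΦ' t ht).mul_const _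
    have hd2 : HasDerivAt (fun s => Φ s ^ (-ν - 1)) (Φ' t * (-ν - 1) * Φ t ^ (-ν - 1 - 1)) t :=
      (hdΦ t ht).rpow_const (Or.inl (hΦpos t ht).ne')
    refine ⟨_, ?_, hd1.mul hd2⟩
    have hkey := key t ht
    have heq : Φ'' t * (-ν) * Φ t ^ (-ν - 1) +
        Φ' t * (-ν) * (Φ' t * (-ν - 1) * Φ t ^ (-ν - 1 - 1)) =
        -(ν * Φ t ^ (-ν - 2) * (Φ'' t * Φ t - (1 + ν) * Φ' t ^ 2)) := by
      have : (-ν - 1 - 1 : ℝ) = -ν - 2 := by ring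
      rw [this, hres]
      ring
    rw [heq]
    have hkey' : 0 ≤ Φ'' t * Φ t - (1 + ν) * Φ' t ^ 2 := by
      simp only [hΦdef, hΦ'def, hΦ''def]
      linarith [key t ht]
    have : 0 ≤ ν * Φ t ^ (-ν - 2) * (Φ'' t * Φ t - (1 + ν) * Φ' t ^ 2) :=
      mul_nonneg (mul_nonneg hν.le hA.le) hkey'
    linarith
  · intro t ht
    exact Real.rpow_pos_of_pos (hΦpos t ht) _
  · have hΦ'0pos : 0 < Φ' 0 := by
      simp only [hΦ'def]
      have : (0:ℝ) + t₀ = t₀ := by ring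
      rw [this]
      linarith
    have hA : (0:ℝ) < Φ 0 ^ (-ν - 1) := Real.rpow_pos_of_pos (hΦpos 0 le_rfl) _
    simp only [hzdef]
    nlinarith [mul_pos (mul_pos hΦ'0pos hν) hA]
end
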